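/- Let N ≥ 2, and let J ≤ M be positive integers. Consider the parameter space of a core tensor G ∈ ℝ^{J × ⋯ × J} (order N) together with factor matrices U^(i) ∈ ℝ^{M × J}, equipped with Lebesgue measure. If N is even, then for Lebesgue-almost every choice of parameters the resulting Tucker tensor A_{d_1,…,d_N} = Σ_{j_1,…,j_N} G_{j_1,…,j_N} U^(1)_{d_1,j_1} ⋯ U^(N)_{d_N,j_N} has CP rank at least J^{N/2}; if N is odd, for Lebesgue-almost every choice of parameters the CP rank is at least J^{(N−1)/2}. -/

import Mathlib

open MeasureTheory

/-- `A` admits a CP representation with `Z` terms. -/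
def IsCPRepr {N M : ℕ} (A : (Fin N → Fin M) → ℝ) (Z : ℕ) : Prop :=
  ∃ (lam : Fin Z → ℝ) (a : Fin Z → Fin N → Fin M → ℝ),
    ∀ d : Fin N → Fin M, A d = ∑ z, lam z * ∏ i, a z i (d i)

/-- The CP rank of a tensor: the minimal number of rank-one terms. -/
noncomputable def cpRank {N M : ℕ} (A : (Fin N → Fin M) → ℝ) : ℕ :=
  sInf {Z | IsCPRepr A Z}

/-- The order-`N` tensor of dimension `M` in each mode obtained from the Tucker format with
core `G ∈ ℝ^{J × ⋯ × J}` and factor matrices `U i ∈ ℝ^{M × J}`. -/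
def tuckerTensor {N M J : ℕ}
    (G : (Fin N → Fin J) → ℝ) (U : Fin N → Fin M → Fin J → ℝ) :
    (Fin N → Fin M) → ℝ :=
  fun d => ∑ j : Fin N → Fin J, G j * ∏ i, U i (d i) (j i)

/-! ### Auxiliary results -/


theorem mvpoly_null_fin : ∀ (n : ℕ) (p : MvPolynomial (Fin n) ℝ), p ≠ 0 →
    volume {x : Fin n → ℝ | MvPolynomial.eval x p = 0} = 0 := by
  intro n
  induction n with
  | zero =>
    intro p hp
    obtain ⟨c, rfl⟩ := MvPolynomial.C_surjective (Fin 0) p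
    have hc : c ≠ 0 := fun h => hp (by rw [h, map_zero])
    rw [show {x : Fin 0 → ℝ | MvPolynomial.eval x (MvPolynomial.C c) = 0} = ∅ by
      ext x; simp [hc]]
    simp
  | succ n IH =>
    intro p hp
    set q : Polynomial (MvPolynomial (Fin n) ℝ) := MvPolynomial.finSuccEquiv ℝ n p with hqdef
    have hq0 : q ≠ 0 := fun h =>
      hp ((MvPolynomial.finSuccEquiv ℝ n).injective (by rw [← hqdef, h, map_zero]))
    have hc0 : q.leadingCoeff ≠ 0 := Polynomial.leadingCoeff_ne_zero.mpr hq0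
    -- the continuous evaluation map
    have hFcont : Continuous (fun y : ℝ × (Fin n → ℝ) => MvPolynomial.eval (Fin.cons y.1 y.2) p) := by
      refine (MvPolynomial.continuous_eval p).comp ?_
      apply continuous_pi
      intro i
      induction i using Fin.cases with
      | zero => simpa using continuous_fst
      | succ j => exact (continuous_apply j).comp continuous_snd
    set C : Set ((Fin n → ℝ) × ℝ) :=
      (fun z : (Fin n → ℝ) × ℝ => MvPolynomial.eval (Fin.cons z.2 z.1) p) ⁻¹' {0} with hCdef
    have hC : MeasurableSet C :=
      ((hFcont.comp continuous_swap).measurable) (measurableSet_singleton 0)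
    have hmem : ∀ z : (Fin n → ℝ) × ℝ,
        z ∈ C ↔ Polynomial.eval z.2 (Polynomial.map (MvPolynomial.eval z.1) q) = 0 := by
      intro z
      rw [hCdef]
      simp only [Set.mem_preimage, Set.mem_singleton_iff]
      rw [MvPolynomial.eval_eq_eval_mv_eval']
    -- the set in question
    have hB : {x : Fin (n+1) → ℝ | MvPolynomial.eval x p = 0} =
        (MeasurableEquiv.piFinSuccAbove (fun _ : Fin (n+1) => ℝ) 0) ⁻¹' (Prod.swap ⁻¹' C) := by
      ext x
      simp only [Set.mem_setOf_eq, Set.mem_preimage]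
      rw [hmem]
      simp only [Prod.snd_swap, Prod.fst_swap]
      rw [← MvPolynomial.eval_eq_eval_mv_eval']
      have hcx : (Fin.cons (x 0) (Fin.removeNth 0 x) : Fin (n+1) → ℝ) = x := by
        funext i
        induction i using Fin.cases with
        | zero => simp
        | succ j => simp [Fin.removeNth, Fin.zero_succAbove]; rfl
      show _ ↔ MvPolynomial.eval (Fin.cons (x 0) (Fin.removeNth 0 x)) p = 0
      rw [hcx]
    rw [hB]
    rw [(volume_preserving_piFinSuccAbove (fun _ : Fin (n+1) => ℝ) 0).measure_preimage
      ((measurable_swap hC).nullMeasurableSet)]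
    have hswap : volume (Prod.swap ⁻¹' C : Set (ℝ × (Fin n → ℝ))) = volume C := by
      rw [show (volume : Measure (ℝ × (Fin n → ℝ))) = (volume : Measure ℝ).prod volume from rfl,
        ← Measure.map_apply measurable_swap hC, Measure.prod_swap]
      rfl
    rw [hswap]
    rw [show (volume : Measure ((Fin n → ℝ) × ℝ)) = (volume : Measure (Fin n → ℝ)).prod volume from rfl]
    rw [Measure.measure_prod_null hC]
    have hae : ∀ᵐ y : Fin n → ℝ, MvPolynomial.eval y q.leadingCoeff ≠ 0 := by
      rw [ae_iff]
      simpa using IH _ hc0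
    filter_upwards [hae] with y hy
    have hmap : Polynomial.map (MvPolynomial.eval y) q ≠ 0 := by
      intro h
      apply hy
      rw [Polynomial.leadingCoeff, ← Polynomial.coeff_map (MvPolynomial.eval y) q.natDegree, h,
        Polynomial.coeff_zero]
    have hfin : ({a : ℝ | (Polynomial.map (MvPolynomial.eval y) q).IsRoot a}).Finite :=
      Polynomial.finite_setOf_isRoot hmap
    have : Prod.mk y ⁻¹' C = {a : ℝ | (Polynomial.map (MvPolynomial.eval y) q).IsRoot a} := by
      ext a
      rw [Set.mem_preimage, hmem]
      rfl
    simp only [Pi.zero_apply]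
    rw [this]
    exact hfin.measure_zero _

theorem mvpoly_null {ι : Type} [Fintype ι] (p : MvPolynomial ι ℝ) (hp : p ≠ 0) :
    volume {x : ι → ℝ | MvPolynomial.eval x p = 0} = 0 := by
  classical
  set e : ι ≃ Fin (Fintype.card ι) := Fintype.equivFin ι with he
  have hmp := MeasureTheory.volume_measurePreserving_piCongrLeft (fun _ : ι => ℝ) e.symm
  have hS : MeasurableSet {x : ι → ℝ | MvPolynomial.eval x p = 0} :=
    (MvPolynomial.continuous_eval p).measurable (measurableSet_singleton 0)
  rw [← hmp.measure_preimage hS.nullMeasurableSet]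
  have hpre : (MeasurableEquiv.piCongrLeft (fun _ : ι => ℝ) e.symm) ⁻¹'
      {x : ι → ℝ | MvPolynomial.eval x p = 0}
      = {y : Fin (Fintype.card ι) → ℝ | MvPolynomial.eval y (MvPolynomial.rename e p) = 0} := by
    ext y
    simp only [Set.mem_preimage, Set.mem_setOf_eq, MvPolynomial.eval_rename]
    have : (MeasurableEquiv.piCongrLeft (fun _ : ι => ℝ) e.symm) y = y ∘ e := by
      funext i
      have h2 := MeasurableEquiv.piCongrLeft_apply_apply e.symm (β := fun _ : ι => ℝ) y (e i)
      simpa using h2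
    rw [this]
  rw [hpre]
  have hinj := MvPolynomial.rename_injective (R := ℝ) (e : ι → Fin (Fintype.card ι)) e.injective
  exact mvpoly_null_fin _ _ (fun h => hp (hinj (by rw [h, map_zero])))

theorem mp_uncurry3 {γ δ ε : Type} [Fintype γ] [Fintype δ] [Fintype ε] :
    MeasurePreserving (fun (f : γ → δ → ε → ℝ) (p : γ × δ × ε) => f p.1 p.2.1 p.2.2)
      volume volume := by
  have hmeas : Measurable (fun (f : γ → δ → ε → ℝ) (p : γ × δ × ε) => f p.1 p.2.1 p.2.2) :=
    measurable_pi_lambda _ fun p =>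
      (measurable_pi_apply p.2.2).comp ((measurable_pi_apply p.2.1).comp (measurable_pi_apply p.1))
  refine ⟨hmeas, ?_⟩
  have hvol : (volume : Measure (γ × δ × ε → ℝ)) = Measure.pi fun _ : γ × δ × ε => (volume : Measure ℝ) := rfl
  rw [hvol]
  refine (Measure.pi_eq (μ := fun _ : γ × δ × ε => (volume : Measure ℝ)) fun s hs => ?_).symm
  rw [Measure.map_apply hmeas (MeasurableSet.univ_pi hs)]
  have hpre : (fun (f : γ → δ → ε → ℝ) (p : γ × δ × ε) => f p.1 p.2.1 p.2.2) ⁻¹' (Set.univ.pi s)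
      = Set.univ.pi (fun c => Set.univ.pi fun d => Set.univ.pi fun e => s (c, d, e)) := by
    ext f
    simp [Set.mem_pi, Prod.forall]
  rw [hpre]
  simp [volume_pi_pi, Fintype.prod_prod_type]

theorem myrank_add_le {m n : Type*} [Fintype m] [Fintype n] (A B : Matrix m n ℝ) :
    (A + B).rank ≤ A.rank + B.rank := by
  rw [Matrix.rank, Matrix.rank, Matrix.rank, Matrix.mulVecLin_add]
  have h1 : LinearMap.range (A.mulVecLin + B.mulVecLin) ≤
      LinearMap.range A.mulVecLin ⊔ LinearMap.range B.mulVecLin := by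
    rintro x ⟨v, rfl⟩
    exact Submodule.mem_sup.mpr ⟨_, ⟨v, rfl⟩, _, ⟨v, rfl⟩, rfl⟩
  exact le_trans (Submodule.finrank_mono h1) (Submodule.finrank_add_le_finrank_add_finrank _ _)

theorem myrank_sum_le {m n ζ : Type*} [Fintype m] [Fintype n]
    (s : Finset ζ) (f : ζ → Matrix m n ℝ) : (∑ z ∈ s, f z).rank ≤ ∑ z ∈ s, (f z).rank := by
  classical
  induction s using Finset.induction_on with
  | empty => simp
  | @insert a s ha ih =>
    rw [Finset.sum_insert ha, Finset.sum_insert ha]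
    exact (myrank_add_le _ _).trans (add_le_add le_rfl ih)

theorem myrank_vecMulVec_le {m n : Type*} [Fintype m] [Fintype n] (w : m → ℝ) (v : n → ℝ) :
    (Matrix.vecMulVec w v).rank ≤ 1 := by
  rw [Matrix.vecMulVec_eq (Fin 1)]
  refine (Matrix.rank_mul_le_left _ _).trans ?_
  exact (Matrix.rank_le_card_width (Matrix.replicateCol (Fin 1) w)).trans (by simp)

theorem myrank_submatrix_le {α β γ δ : Type*} [Fintype α] [Fintype β] [Fintype γ] [Fintype δ]
    [DecidableEq α] [DecidableEq β]
    (A : Matrix α β ℝ) (f : γ → α) (g : δ → β) : (A.submatrix f g).rank ≤ A.rank := by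
  have hAB : A.submatrix f g =
      (Matrix.of fun (i : γ) (a : α) => if a = f i then (1:ℝ) else 0) * A *
      (Matrix.of fun (b : β) (j : δ) => if b = g j then (1:ℝ) else 0) := by
    ext i j
    simp [Matrix.mul_apply, ite_mul, mul_ite, Finset.sum_ite_eq, Finset.sum_ite_eq']
  rw [hAB]
  exact (Matrix.rank_mul_le_left _ _).trans (Matrix.rank_mul_le_right _ _)

theorem isCPRepr_total {N M : ℕ} (A : (Fin N → Fin M) → ℝ) : IsCPRepr A (M ^ N) := by
  classical
  have hcard : Fintype.card (Fin N → Fin M) = M ^ N := by simp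
  let e : Fin (M ^ N) ≃ (Fin N → Fin M) := (Fintype.equivFinOfCardEq hcard).symm
  refine ⟨fun z => A (e z), fun z i m => if m = e z i then 1 else 0, fun d => ?_⟩
  have key : ∀ z, (∏ i, if d i = e z i then (1:ℝ) else 0) = if z = e.symm d then 1 else 0 := by
    intro z
    by_cases h : d = e z
    · rw [if_pos (by rw [h, Equiv.symm_apply_apply])]
      refine Finset.prod_eq_one fun i _ => by rw [if_pos (congrFun h i)]
    · rw [if_neg (fun hz => h (by rw [hz, Equiv.apply_symm_apply]))]
      obtain ⟨i, hi⟩ := Function.ne_iff.mp h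
      exact Finset.prod_eq_zero (Finset.mem_univ i) (by simp [hi])
  simp only [key, mul_ite, mul_one, mul_zero]
  rw [Finset.sum_ite_eq' Finset.univ (e.symm d) (fun z => A (e z))]
  simp

theorem cpRank_isCPRepr {N M : ℕ} (A : (Fin N → Fin M) → ℝ) : IsCPRepr A (cpRank A) := by
  have hne : {Z | IsCPRepr A Z}.Nonempty := ⟨M ^ N, isCPRepr_total A⟩
  exact Nat.sInf_mem hne

def halfEquiv (N : ℕ) : (Fin (N - N/2) ⊕ Fin (N/2)) ≃ Fin N :=
  finSumFinEquiv.trans (finCongr (Nat.sub_add_cancel (Nat.div_le_self N 2)))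

def tmat {N M : ℕ} (A : (Fin N → Fin M) → ℝ) :
    Matrix (Fin (N - N/2) → Fin M) (Fin (N/2) → Fin M) ℝ :=
  Matrix.of fun r c => A fun i => Sum.elim r c ((halfEquiv N).symm i)

theorem tmat_rank_le {N M Z : ℕ} {A : (Fin N → Fin M) → ℝ} (h : IsCPRepr A Z) :
    (tmat A).rank ≤ Z := by
  obtain ⟨lam, a, ha⟩ := h
  have hsum : tmat A = ∑ z : Fin Z, Matrix.vecMulVec
      (fun r : Fin (N - N/2) → Fin M => lam z * ∏ i₁, a z (halfEquiv N (Sum.inl i₁)) (r i₁))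
      (fun c : Fin (N/2) → Fin M => ∏ i₂, a z (halfEquiv N (Sum.inr i₂)) (c i₂)) := by
    ext r c
    simp only [tmat, Matrix.of_apply, Matrix.sum_apply, Matrix.vecMulVec_apply]
    rw [ha]
    refine Finset.sum_congr rfl fun z _ => ?_
    rw [mul_assoc]
    congr 1
    rw [← Equiv.prod_comp (halfEquiv N)
      (fun i => a z i (Sum.elim r c ((halfEquiv N).symm i)))]
    simp only [Equiv.symm_apply_apply]
    rw [Fintype.prod_sum_type]
    rfl
  rw [hsum]
  refine (myrank_sum_le _ _).trans ?_
  calc ∑ z : Fin Z, (Matrix.vecMulVec _ _).rank ≤ ∑ _z : Fin Z, 1 :=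
        Finset.sum_le_sum fun z _ => myrank_vecMulVec_le _ _
    _ = Z := by simp

def rowSel {N M J : ℕ} (hJM : J ≤ M) (hk : 0 < N/2) (j : Fin (N/2) → Fin J) :
    Fin (N - N/2) → Fin M :=
  fun i => Fin.castLE hJM (j (if h : (i : ℕ) < N/2 then ⟨i, h⟩ else ⟨0, hk⟩))

def colSel {N M J : ℕ} (hJM : J ≤ M) (j : Fin (N/2) → Fin J) : Fin (N/2) → Fin M :=
  fun i => Fin.castLE hJM (j i)

def dIdx {N M J : ℕ} (hJM : J ≤ M) (hk : 0 < N/2) (j j' : Fin (N/2) → Fin J) : Fin N → Fin M :=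
  fun i => Sum.elim (rowSel hJM hk j) (colSel hJM j') ((halfEquiv N).symm i)

abbrev PIdx (N M J : ℕ) := (Fin N → Fin J) ⊕ (Fin N × Fin M × Fin J)

noncomputable def pm {N M J : ℕ} (hJM : J ≤ M) (hk : 0 < N/2) :
    Matrix (Fin (N/2) → Fin J) (Fin (N/2) → Fin J) (MvPolynomial (PIdx N M J) ℝ) :=
  Matrix.of fun j j' => ∑ g : Fin N → Fin J,
    MvPolynomial.X (Sum.inl g) * ∏ i, MvPolynomial.X (Sum.inr (i, dIdx hJM hk j j' i, g i))

def par {N M J : ℕ} (x : ((Fin N → Fin J) → ℝ) × (Fin N → Fin M → Fin J → ℝ)) :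
    PIdx N M J → ℝ :=
  Sum.elim x.1 (fun v => x.2 v.1 v.2.1 v.2.2)

theorem eval_pm {N M J : ℕ} (hJM : J ≤ M) (hk : 0 < N/2)
    (x : ((Fin N → Fin J) → ℝ) × (Fin N → Fin M → Fin J → ℝ)) :
    (pm hJM hk).map (MvPolynomial.eval (par x)) =
      (tmat (tuckerTensor x.1 x.2)).submatrix (rowSel hJM hk) (colSel hJM) := by
  ext j j'
  simp only [pm, Matrix.map_apply, Matrix.of_apply, map_sum, map_mul, map_prod,
    MvPolynomial.eval_X, Matrix.submatrix_apply, tmat, tuckerTensor, par, Sum.elim_inl,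
    Sum.elim_inr]
  rfl

def wit {N M J : ℕ} (hkn : N/2 ≤ N - N/2) : PIdx N M J → ℝ :=
  Sum.elim
    (fun g => if ∀ i₂ : Fin (N/2),
        g (halfEquiv N (Sum.inr i₂)) = g (halfEquiv N (Sum.inl (Fin.castLE hkn i₂)))
      then 1 else 0)
    (fun v => if (v.2.1 : ℕ) = (v.2.2 : ℕ) then 1 else 0)

theorem eval_pm_wit {N M J : ℕ} (hJM : J ≤ M) (hk : 0 < N/2) (hkn : N/2 ≤ N - N/2) :
    (pm (N := N) hJM hk).map (MvPolynomial.eval (wit hkn)) = 1 := by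
  classical
  ext j j'
  simp only [pm, Matrix.map_apply, Matrix.of_apply, map_sum, map_mul, map_prod,
    MvPolynomial.eval_X]
  have hlt : ∀ i, (dIdx hJM hk j j' i : ℕ) < J := by
    intro i
    unfold dIdx
    rcases h : (halfEquiv N).symm i with a | b
    · simp only [Sum.elim_inl, rowSel, Fin.coe_castLE]
      exact (j _).isLt
    · simp only [Sum.elim_inr, colSel, Fin.coe_castLE]
      exact (j' _).isLt
  set g₀ : Fin N → Fin J := fun i => ⟨(dIdx hJM hk j j' i : ℕ), hlt i⟩ with hg₀
  have hprod : ∀ g : Fin N → Fin J,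
      (∏ i, wit (M := M) hkn (Sum.inr (i, dIdx hJM hk j j' i, g i))) =
        if g = g₀ then (1:ℝ) else 0 := by
    intro g
    by_cases h : g = g₀
    · subst h
      rw [if_pos rfl]
      refine Finset.prod_eq_one fun i _ => ?_
      simp [wit, hg₀]
    · rw [if_neg h]
      obtain ⟨i, hi⟩ := Function.ne_iff.mp h
      refine Finset.prod_eq_zero (Finset.mem_univ i) ?_
      have hne : ¬ ((dIdx hJM hk j j' i : ℕ) = (g i : ℕ)) := by
        intro hval
        exact hi (Fin.ext (by rw [hg₀]; exact hval.symm))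
      simp [wit, hne]
  simp only [hprod, mul_ite, mul_one, mul_zero]
  rw [Finset.sum_ite_eq' Finset.univ g₀ (fun g => wit (M := M) hkn (Sum.inl g))]
  simp only [Finset.mem_univ, if_true]
  have hv1 : ∀ i₂ : Fin (N/2), (g₀ (halfEquiv N (Sum.inr i₂)) : ℕ) = (j' i₂ : ℕ) := by
    intro i₂
    simp [hg₀, dIdx, Equiv.symm_apply_apply, colSel]
  have hv2 : ∀ i₂ : Fin (N/2),
      (g₀ (halfEquiv N (Sum.inl (Fin.castLE hkn i₂))) : ℕ) = (j i₂ : ℕ) := by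
    intro i₂
    simp only [hg₀, dIdx, Equiv.symm_apply_apply, Sum.elim_inl, rowSel, Fin.coe_castLE]
    rw [dif_pos (by simp)]
  have hcond : (∀ i₂ : Fin (N/2),
      g₀ (halfEquiv N (Sum.inr i₂)) = g₀ (halfEquiv N (Sum.inl (Fin.castLE hkn i₂)))) ↔ j = j' := by
    constructor
    · intro h
      funext i₂
      exact Fin.ext (by rw [← hv2 i₂, ← hv1 i₂, h i₂])
    · rintro rfl
      intro i₂
      exact Fin.ext (by rw [hv1 i₂, hv2 i₂])
  rw [Matrix.one_apply]
  by_cases hjj : j = j'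
  · rw [if_pos hjj]
    simp only [wit, Sum.elim_inl]
    rw [if_pos (hcond.mpr hjj)]
  · rw [if_neg hjj]
    simp only [wit, Sum.elim_inl]
    rw [if_neg (fun hc => hjj (hcond.mp hc))]

theorem aux_main (N M J : ℕ) (hN : 2 ≤ N) (hJ : 1 ≤ J) (hJM : J ≤ M) :
    volume {x : ((Fin N → Fin J) → ℝ) × (Fin N → Fin M → Fin J → ℝ) |
      cpRank (tuckerTensor x.1 x.2) < J ^ (N / 2)} = 0 := by
  classical
  have hk : 0 < N / 2 := Nat.div_pos hN (by norm_num)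
  have hkn : N / 2 ≤ N - N / 2 := by omega
  have hp0 : (pm (N := N) hJM hk).det ≠ 0 := by
    intro h
    have h1 : MvPolynomial.eval (wit (M := M) hkn) (pm (N := N) hJM hk).det = 1 := by
      rw [RingHom.map_det, RingHom.mapMatrix_apply, eval_pm_wit hJM hk hkn, Matrix.det_one]
    rw [h, map_zero] at h1
    exact zero_ne_one h1
  have hZ : MeasurableSet {w : PIdx N M J → ℝ | MvPolynomial.eval w (pm (N := N) hJM hk).det = 0} :=
    (MvPolynomial.continuous_eval _).measurable (measurableSet_singleton 0)
  have hψ : MeasurePreserving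
      (fun x : ((Fin N → Fin J) → ℝ) × (Fin N → Fin M → Fin J → ℝ) => par x)
      volume volume := by
    have hψeq : (fun x : ((Fin N → Fin J) → ℝ) × (Fin N → Fin M → Fin J → ℝ) => par x) =
        (MeasurableEquiv.sumPiEquivProdPi (fun _ : PIdx N M J => ℝ)).symm ∘
          (Prod.map id (fun (f : Fin N → Fin M → Fin J → ℝ) (v : Fin N × Fin M × Fin J) =>
            f v.1 v.2.1 v.2.2)) := by
      funext x
      funext s
      cases s <;> rfl
    rw [hψeq]
    exact (volume_measurePreserving_sumPiEquivProdPi_symm _).comp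
      ((MeasurePreserving.id _).prod mp_uncurry3)
  have hsub : {x : ((Fin N → Fin J) → ℝ) × (Fin N → Fin M → Fin J → ℝ) |
        cpRank (tuckerTensor x.1 x.2) < J ^ (N / 2)} ⊆
      (fun x : ((Fin N → Fin J) → ℝ) × (Fin N → Fin M → Fin J → ℝ) => par x) ⁻¹'
        {w : PIdx N M J → ℝ | MvPolynomial.eval w (pm (N := N) hJM hk).det = 0} := by
    intro x hx
    simp only [Set.mem_setOf_eq] at hx
    by_contra hne
    simp only [Set.mem_preimage, Set.mem_setOf_eq] at hne
    have hdet : MvPolynomial.eval (par x) (pm (N := N) hJM hk).det =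
        ((tmat (tuckerTensor x.1 x.2)).submatrix (rowSel hJM hk) (colSel hJM)).det := by
      rw [RingHom.map_det, RingHom.mapMatrix_apply, eval_pm hJM hk x]
    rw [hdet] at hne
    have hunit : IsUnit ((tmat (tuckerTensor x.1 x.2)).submatrix (rowSel hJM hk) (colSel hJM)) :=
      (Matrix.isUnit_iff_isUnit_det _).mpr (isUnit_iff_ne_zero.mpr hne)
    have hrank := Matrix.rank_of_isUnit _ hunit
    have hcard : Fintype.card (Fin (N/2) → Fin J) = J ^ (N/2) := by simp
    have h1 := myrank_submatrix_le (tmat (tuckerTensor x.1 x.2)) (rowSel hJM hk) (colSel hJM)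
    have h2 := tmat_rank_le (cpRank_isCPRepr (tuckerTensor x.1 x.2))
    omega
  refine measure_mono_null hsub ?_
  rw [hψ.measure_preimage hZ.nullMeasurableSet]
  exact mvpoly_null _ hp0

/-- For Lebesgue-almost every Tucker parameter configuration (core `G` of size `J` in every
mode and factor matrices `U i ∈ ℝ^{M × J}`), the resulting tensor has CP rank at least
`J^(N/2)` when `N` is even, and at least `J^((N-1)/2)` when `N` is odd. -/
theorem tucker_cpRank_lower_bound_ae_equal_ranks
    (N M J : ℕ) (hN : 2 ≤ N) (hJ : 1 ≤ J) (hJM : J ≤ M) :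
    (Even N →
      volume {x : ((Fin N → Fin J) → ℝ) × (Fin N → Fin M → Fin J → ℝ) |
        cpRank (tuckerTensor x.1 x.2) < J ^ (N / 2)} = 0) ∧
    (Odd N →
      volume {x : ((Fin N → Fin J) → ℝ) × (Fin N → Fin M → Fin J → ℝ) |
        cpRank (tuckerTensor x.1 x.2) < J ^ ((N - 1) / 2)} = 0) := by

  constructor
  · intro _
    exact aux_main N M J hN hJ hJM
  · intro hodd
    have hexp : (N - 1) / 2 = N / 2 := by
      obtain ⟨m, rfl⟩ := hodd
      omega
    rw [hexp]
    exact aux_main N M J hN hJ hJM
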